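/- For the three-web on the domain {(x¹,x²,y¹,y²) ∈ ℝ⁴ : y¹ ≠ −1, y² ≠ −1, x¹x² ≠ 1} given by f¹ = x¹ + y¹ + x¹y², f² = x² + y² + x²y¹, the torsion covector is a₁ = 1/((1 + y¹)(1 − x¹x²)) and a₂ = 1/((1 + y²)(1 − x¹x²)); in particular a₁ ≠ 0 and a₂ ≠ 0 at every point of the domain. -/

import Mathlib

noncomputable section

open Matrix

/-- Partial derivative of `g` with respect to the `j`-th coordinate at the point `x`. -/
def pd (j : Fin 2) (g : (Fin 2 → ℝ) → ℝ) (x : Fin 2 → ℝ) : ℝ :=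
  deriv (fun t => g (Function.update x j t)) (x j)

variable (f : Fin 2 → (Fin 2 → ℝ) → (Fin 2 → ℝ) → ℝ)

/-- Jacobian matrix `f̄ = (∂fⁱ/∂xʲ)` with respect to the first group of variables. -/
def fbar (x y : Fin 2 → ℝ) : Matrix (Fin 2) (Fin 2) ℝ :=
  Matrix.of fun i j => pd j (fun x' => f i x' y) x

/-- Jacobian matrix `f̃ = (∂fⁱ/∂yʲ)` with respect to the second group of variables. -/
def ftil (x y : Fin 2 → ℝ) : Matrix (Fin 2) (Fin 2) ℝ :=
  Matrix.of fun i j => pd j (fun y' => f i x y') y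

/-- Mixed second partial derivative `∂²fⁱ/∂xˡ∂yᵐ`. -/
def d2 (i l m : Fin 2) (x y : Fin 2 → ℝ) : ℝ :=
  pd m (fun y' => pd l (fun x' => f i x' y') x) y

/-- Connection coefficients
`Γⁱⱼₖ = −∑_{l,m} (∂²fⁱ/∂xˡ∂yᵐ) ḡˡⱼ g̃ᵐₖ`, where `ḡ = f̄⁻¹`, `g̃ = f̃⁻¹`. -/
def Gam (i j k : Fin 2) (x y : Fin 2 → ℝ) : ℝ :=
  - ∑ l : Fin 2, ∑ m : Fin 2,
      d2 f i l m x y * (fbar f x y)⁻¹ l j * (ftil f x y)⁻¹ m k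

/-- Torsion covector `aⱼ = ∑ₖ (Γᵏⱼₖ − Γᵏₖⱼ)`. -/
def aCov (j : Fin 2) (x y : Fin 2 → ℝ) : ℝ :=
  ∑ k : Fin 2, (Gam f k j k x y - Gam f k k j x y)

/-- Covariant derivative `p_{ik} = ∑ₘ (∂aᵢ/∂xᵐ) ḡᵐₖ − ∑ⱼ aⱼ Γʲₖᵢ`. -/
def pCov (i k : Fin 2) (x y : Fin 2 → ℝ) : ℝ :=
  (∑ m : Fin 2, pd m (fun x' => aCov f i x' y) x * (fbar f x y)⁻¹ m k)
    - ∑ j : Fin 2, aCov f j x y * Gam f j k i x y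

/-- Covariant derivative `q_{ik} = ∑ₘ (∂aᵢ/∂yᵐ) g̃ᵐₖ − ∑ⱼ aⱼ Γʲᵢₖ`. -/
def qCov (i k : Fin 2) (x y : Fin 2 → ℝ) : ℝ :=
  (∑ m : Fin 2, pd m (fun y' => aCov f i x y') y * (ftil f x y)⁻¹ m k)
    - ∑ j : Fin 2, aCov f j x y * Gam f j i k x y

/-- Isoclinicity invariant `p = (p₁₂ − p₂₁)/2`. -/
def pIso (x y : Fin 2 → ℝ) : ℝ := (pCov f 0 1 x y - pCov f 1 0 x y) / 2

/-- Isoclinicity invariant `q = (q₁₂ − q₂₁)/2`. -/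
def qIso (x y : Fin 2 → ℝ) : ℝ := (qCov f 0 1 x y - qCov f 1 0 x y) / 2


/-- The web `f¹ = x¹ + y¹ + x¹y²`, `f² = x² + y² + x²y¹`.
(Indices: `x 0 ↦ x¹`, `x 1 ↦ x²`, `y 0 ↦ y¹`, `y 1 ↦ y²`.) -/
noncomputable def webE : Fin 2 → (Fin 2 → ℝ) → (Fin 2 → ℝ) → ℝ :=
  ![fun x y => x 0 + y 0 + x 0 * y 1,
    fun x y => x 1 + y 1 + x 1 * y 0]


-- x-partials
lemma pdx00 (x y : Fin 2 → ℝ) : pd 0 (fun x' => webE 0 x' y) x = 1 + y 1 := by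
  have h : HasDerivAt (fun t : ℝ => t + y 0 + t * y 1) (1 + y 1) (x 0) :=
    by exact (((hasDerivAt_id (x 0)).add_const (y 0)).add ((hasDerivAt_id (x 0)).mul_const (y 1))).congr_deriv (by ring)
  simpa [pd, webE, Function.update] using h.deriv

lemma pdx01 (x y : Fin 2 → ℝ) : pd 1 (fun x' => webE 0 x' y) x = 0 := by
  simp [pd, webE, Function.update]

lemma pdx10 (x y : Fin 2 → ℝ) : pd 0 (fun x' => webE 1 x' y) x = 0 := by
  simp [pd, webE, Function.update]

lemma pdx11 (x y : Fin 2 → ℝ) : pd 1 (fun x' => webE 1 x' y) x = 1 + y 0 := by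
  have h : HasDerivAt (fun t : ℝ => t + y 1 + t * y 0) (1 + y 0) (x 1) :=
    by exact (((hasDerivAt_id (x 1)).add_const (y 1)).add ((hasDerivAt_id (x 1)).mul_const (y 0))).congr_deriv (by ring)
  simpa [pd, webE, Function.update] using h.deriv

-- y-partials
lemma pdy00 (x y : Fin 2 → ℝ) : pd 0 (fun y' => webE 0 x y') y = 1 := by
  have h : HasDerivAt (fun t : ℝ => x 0 + t + x 0 * y 1) 1 (y 0) :=
    by simpa using (((hasDerivAt_id (y 0)).const_add (x 0)).add_const (x 0 * y 1))
  simpa [pd, webE, Function.update] using h.deriv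

lemma pdy01 (x y : Fin 2 → ℝ) : pd 1 (fun y' => webE 0 x y') y = x 0 := by
  have h : HasDerivAt (fun t : ℝ => x 0 + y 0 + x 0 * t) (x 0) (y 1) :=
    by simpa using ((hasDerivAt_id (y 1)).const_mul (x 0)).const_add (x 0 + y 0)
  simpa [pd, webE, Function.update] using h.deriv

lemma pdy10 (x y : Fin 2 → ℝ) : pd 0 (fun y' => webE 1 x y') y = x 1 := by
  have h : HasDerivAt (fun t : ℝ => x 1 + y 1 + x 1 * t) (x 1) (y 0) :=
    by simpa using ((hasDerivAt_id (y 0)).const_mul (x 1)).const_add (x 1 + y 1)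
  simpa [pd, webE, Function.update] using h.deriv

lemma pdy11 (x y : Fin 2 → ℝ) : pd 1 (fun y' => webE 1 x y') y = 1 := by
  have h : HasDerivAt (fun t : ℝ => x 1 + t + x 1 * y 0) 1 (y 1) :=
    by simpa using (((hasDerivAt_id (y 1)).const_add (x 1)).add_const (x 1 * y 0))
  simpa [pd, webE, Function.update] using h.deriv

-- second derivatives
lemma d2_000 (x y : Fin 2 → ℝ) : d2 webE 0 0 0 x y = 0 := by
  unfold d2
  have he : (fun y' => pd 0 (fun x' => webE 0 x' y') x) = fun y' : Fin 2 → ℝ => 1 + y' 1 :=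
    funext fun y' => pdx00 x y'
  rw [he]; simp [pd, Function.update]

lemma d2_001 (x y : Fin 2 → ℝ) : d2 webE 0 0 1 x y = 1 := by
  unfold d2
  have he : (fun y' => pd 0 (fun x' => webE 0 x' y') x) = fun y' : Fin 2 → ℝ => 1 + y' 1 :=
    funext fun y' => pdx00 x y'
  rw [he]
  have h : HasDerivAt (fun t : ℝ => 1 + t) 1 (y 1) := (hasDerivAt_id (y 1)).const_add 1
  simpa [pd, Function.update] using h.deriv

lemma d2_01m (m : Fin 2) (x y : Fin 2 → ℝ) : d2 webE 0 1 m x y = 0 := by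
  unfold d2
  have he : (fun y' => pd 1 (fun x' => webE 0 x' y') x) = fun _ : Fin 2 → ℝ => (0:ℝ) :=
    funext fun y' => pdx01 x y'
  rw [he]; simp [pd]

lemma d2_10m (m : Fin 2) (x y : Fin 2 → ℝ) : d2 webE 1 0 m x y = 0 := by
  unfold d2
  have he : (fun y' => pd 0 (fun x' => webE 1 x' y') x) = fun _ : Fin 2 → ℝ => (0:ℝ) :=
    funext fun y' => pdx10 x y'
  rw [he]; simp [pd]

lemma d2_110 (x y : Fin 2 → ℝ) : d2 webE 1 1 0 x y = 1 := by
  unfold d2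
  have he : (fun y' => pd 1 (fun x' => webE 1 x' y') x) = fun y' : Fin 2 → ℝ => 1 + y' 0 :=
    funext fun y' => pdx11 x y'
  rw [he]
  have h : HasDerivAt (fun t : ℝ => 1 + t) 1 (y 0) := (hasDerivAt_id (y 0)).const_add 1
  simpa [pd, Function.update] using h.deriv

lemma d2_111 (x y : Fin 2 → ℝ) : d2 webE 1 1 1 x y = 0 := by
  unfold d2
  have he : (fun y' => pd 1 (fun x' => webE 1 x' y') x) = fun y' : Fin 2 → ℝ => 1 + y' 0 :=
    funext fun y' => pdx11 x y'
  rw [he]; simp [pd, Function.update]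

lemma fbar_eq (x y : Fin 2 → ℝ) :
    fbar webE x y = !![1 + y 1, 0; 0, 1 + y 0] := by
  ext i j
  fin_cases i <;> fin_cases j <;>
    simp [fbar, pdx00, pdx01, pdx10, pdx11]

lemma ftil_eq (x y : Fin 2 → ℝ) :
    ftil webE x y = !![1, x 0; x 1, 1] := by
  ext i j
  fin_cases i <;> fin_cases j <;>
    simp [ftil, pdy00, pdy01, pdy10, pdy11]


/-- For the web `webE` on the domain `y¹ ≠ −1, y² ≠ −1, x¹x² ≠ 1`, the torsion
covector is `a₁ = 1/((1 + y¹)(1 − x¹x²))` and `a₂ = 1/((1 + y²)(1 − x¹x²))`;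
in particular `a₁ ≠ 0` and `a₂ ≠ 0` at every point of the domain. -/
theorem webE_torsion_covector (x y : Fin 2 → ℝ)
    (h1 : y 0 ≠ -1) (h2 : y 1 ≠ -1) (h3 : x 0 * x 1 ≠ 1) :
    aCov webE 0 x y = 1 / ((1 + y 0) * (1 - x 0 * x 1)) ∧
    aCov webE 1 x y = 1 / ((1 + y 1) * (1 - x 0 * x 1)) ∧
    aCov webE 0 x y ≠ 0 ∧ aCov webE 1 x y ≠ 0 := by
  have hy0 : (1 : ℝ) + y 0 ≠ 0 := fun h => h1 (by linarith)
  have hy1 : (1 : ℝ) + y 1 ≠ 0 := fun h => h2 (by linarith)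
  have hD : (1 : ℝ) - x 0 * x 1 ≠ 0 := fun h => h3 (by linarith)
  have hfi : (fbar webE x y)⁻¹ = !![(1 + y 1)⁻¹, 0; 0, (1 + y 0)⁻¹] := by
    apply Matrix.inv_eq_right_inv
    rw [fbar_eq]
    ext i j
    fin_cases i <;> fin_cases j <;>
      simp [Matrix.mul_apply, Fin.sum_univ_two, mul_inv_cancel₀, hy0, hy1]
  have hti : (ftil webE x y)⁻¹ =
      !![(1 - x 0 * x 1)⁻¹, -(x 0) * (1 - x 0 * x 1)⁻¹;
         -(x 1) * (1 - x 0 * x 1)⁻¹, (1 - x 0 * x 1)⁻¹] := by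
    have hD' : (1 : ℝ) - x 1 * x 0 ≠ 0 := by rwa [mul_comm]
    apply Matrix.inv_eq_right_inv
    rw [ftil_eq]
    ext i j
    fin_cases i <;> fin_cases j <;>
      · simp [Matrix.mul_apply, Fin.sum_univ_two]
        try (field_simp; try ring)
  have ha0 : aCov webE 0 x y = 1 / ((1 + y 0) * (1 - x 0 * x 1)) := by
    simp only [aCov, Gam, Fin.sum_univ_two, hfi, hti,
      d2_000, d2_001, d2_01m, d2_10m, d2_110, d2_111]
    simp [Matrix.cons_val_zero, Matrix.cons_val_one]
    field_simp
  have ha1 : aCov webE 1 x y = 1 / ((1 + y 1) * (1 - x 0 * x 1)) := by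
    simp only [aCov, Gam, Fin.sum_univ_two, hfi, hti,
      d2_000, d2_001, d2_01m, d2_10m, d2_110, d2_111]
    simp [Matrix.cons_val_zero, Matrix.cons_val_one]
    field_simp
  refine ⟨ha0, ha1, ?_, ?_⟩
  · rw [ha0]; exact one_div_ne_zero (mul_ne_zero hy0 hD)
  · rw [ha1]; exact one_div_ne_zero (mul_ne_zero hy1 hD)

end
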